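/- Let Δ be the coproduct on the polynomial algebra 𝓕 over rooted labelled trees defined by Δτ = Σ_{s ∈ Sub(τ)} (τ\s) ⊗ s, extended multiplicatively. Then Δ is coassociative: (Δ ⊗ Id)∘Δ = (Id ⊗ Δ)∘Δ. -/

import Mathlib

set_option synthInstance.maxHeartbeats 1000000
set_option maxHeartbeats 2000000


open scoped TensorProduct

/-- Rooted trees with labels in `{1,…,ℓ}`. -/
inductive LTree (ℓ : ℕ) : Type where
  | node (label : Fin ℓ) (children : List (LTree ℓ)) : LTree ℓ

namespace LTree

/-- All ways of choosing, for each child, one pair (pruned forest, chosen subtrees),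
concatenating the results: the Cartesian product of the lists of choices. -/
def combine {ℓ : ℕ} :
    List (List (List (LTree ℓ) × List (LTree ℓ))) →
      List (List (LTree ℓ) × List (LTree ℓ))
  | [] => [([], [])]
  | l :: ls => (combine ls).flatMap fun q => l.map fun p => (p.1 ++ q.1, p.2 ++ q.2)

/-- The combinatorial subtree coproduct of a tree `τ`: the list of all pairs
`(τ\s, s)` where `s` runs over the rooted subtrees of `τ` sharing the root of `τ`
(including the empty subtree, first entry, and `τ` itself), recorded as pairs of
forests; the second forest has at most one tree. -/
def cop {ℓ : ℕ} : LTree ℓ → List (List (LTree ℓ) × List (LTree ℓ))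
  | node a ts =>
      ([node a ts], []) ::
        (combine (ts.attach.map fun t => cop t.1)).map fun p => (p.1, [node a p.2])
decreasing_by
  have := List.sizeOf_lt_of_mem t.2
  simp_wf
  omega

end LTree

/-- The polynomial algebra `𝓕` with indeterminates the rooted labelled trees. -/
abbrev TreeAlg (ℓ : ℕ) : Type := MvPolynomial (LTree ℓ) ℝ

/-- The monomial in `𝓕` associated with a forest (a list of trees). -/
noncomputable def forestMonomial {ℓ : ℕ} (f : List (LTree ℓ)) : TreeAlg ℓ :=
  (f.map MvPolynomial.X).prod

/-- `Δτ = Σ_{s ∈ Sub(τ)} (τ\s) ⊗ s` on the generator `τ`. -/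
noncomputable def copElem {ℓ : ℕ} (τ : LTree ℓ) : TreeAlg ℓ ⊗[ℝ] TreeAlg ℓ :=
  ((LTree.cop τ).map fun p => forestMonomial p.1 ⊗ₜ[ℝ] forestMonomial p.2).sum

/-- The coproduct `Δ : 𝓕 → 𝓕 ⊗ 𝓕`, the multiplicative (algebra-map) extension of
`Δτ = Σ_{s ∈ Sub(τ)} (τ\s) ⊗ s`. -/
noncomputable def treeCoproduct (ℓ : ℕ) : TreeAlg ℓ →ₐ[ℝ] TreeAlg ℓ ⊗[ℝ] TreeAlg ℓ :=
  MvPolynomial.aeval copElem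

namespace TreeProof

open LTree MvPolynomial

section Sums
variable {α β : Type*} {M : Type*} [AddCommMonoid M]

theorem sum_map_flatMap (l : List α) (g : α → List β) (F : β → M) :
    ((l.flatMap g).map F).sum = (l.map fun a => ((g a).map F).sum).sum := by
  induction l with
  | nil => simp
  | cons a l ih => simp [List.flatMap_cons, ih]

theorem sum_map_comm (l₁ : List α) (l₂ : List β) (F : α → β → M) :
    (l₁.map fun a => (l₂.map fun b => F a b).sum).sum
      = (l₂.map fun b => (l₁.map fun a => F a b).sum).sum := by
  induction l₁ with
  | nil => simp
  | cons a l ih => simp [ih, List.sum_map_add]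

end Sums

variable {ℓ : ℕ}

/-- the coproduct list of a forest -/
def CF (ts : List (LTree ℓ)) : List (List (LTree ℓ) × List (LTree ℓ)) :=
  LTree.combine (ts.map LTree.cop)

theorem combine_singleton (l : List (List (LTree ℓ) × List (LTree ℓ))) :
    combine [l] = l := by
  simp [combine]

theorem combine_append (xs ys : List (List (List (LTree ℓ) × List (LTree ℓ)))) :
    combine (xs ++ ys) = (combine ys).flatMap fun q => (combine xs).map fun p =>
      (p.1 ++ q.1, p.2 ++ q.2) := by
  induction xs with
  | nil => simp [combine]
  | cons x xs ih =>
      simp [combine, ih, List.flatMap_assoc, List.flatMap_map, List.map_flatMap, List.map_map, Function.comp_def,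
        List.append_assoc, List.append_eq]

theorem CF_nil : CF ([] : List (LTree ℓ)) = [([], [])] := rfl

theorem CF_cons (t : LTree ℓ) (ts : List (LTree ℓ)) :
    CF (t :: ts) = (CF ts).flatMap fun q => (cop t).map fun p =>
      (p.1 ++ q.1, p.2 ++ q.2) := rfl

theorem CF_singleton (t : LTree ℓ) : CF [t] = cop t := by
  simpa [CF] using combine_singleton (cop t)

theorem CF_append (a b : List (LTree ℓ)) :
    CF (a ++ b) = (CF b).flatMap fun q => (CF a).map fun p =>
      (p.1 ++ q.1, p.2 ++ q.2) := by
  rw [CF, List.map_append, combine_append]; rfl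

theorem cop_eq (a : Fin ℓ) (ts : List (LTree ℓ)) :
    cop (node a ts) = ([node a ts], []) ::
      (CF ts).map fun p => (p.1, [node a p.2]) := by
  rw [cop, CF, List.attach_map_val (l := ts) (f := cop)]


theorem M_nil : forestMonomial ([] : List (LTree ℓ)) = 1 := rfl

theorem M_singleton (t : LTree ℓ) : forestMonomial [t] = X t := by
  simp [forestMonomial]

theorem M_append (a b : List (LTree ℓ)) :
    forestMonomial (a ++ b) = forestMonomial a * forestMonomial b := by
  simp [forestMonomial]

/-- the coproduct of the monomial of a forest, as an explicit sum -/
noncomputable def DF (ts : List (LTree ℓ)) : TreeAlg ℓ ⊗[ℝ] TreeAlg ℓ :=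
  ((CF ts).map fun p => forestMonomial p.1 ⊗ₜ[ℝ] forestMonomial p.2).sum

theorem DF_nil : DF ([] : List (LTree ℓ)) = 1 := by
  simp [DF, CF_nil, M_nil, Algebra.TensorProduct.one_def]

theorem DF_singleton (t : LTree ℓ) : DF [t] = copElem t := by
  rw [DF, CF_singleton]; rfl

theorem DF_append (a b : List (LTree ℓ)) : DF (a ++ b) = DF a * DF b := by
  rw [DF, CF_append, sum_map_flatMap]
  simp only [List.map_map, Function.comp_def, M_append,
    ← Algebra.TensorProduct.tmul_mul_tmul]
  simp only [List.sum_map_mul_right, List.sum_map_mul_left]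
  rfl

theorem delta_monomial (f : List (LTree ℓ)) :
    treeCoproduct ℓ (forestMonomial f) = DF f := by
  induction f with
  | nil => rw [M_nil, map_one, DF_nil]
  | cons t l ih =>
      have h1 : forestMonomial (t :: l) = MvPolynomial.X t * forestMonomial l := by
        simp [forestMonomial]
      have h2 : DF (t :: l) = copElem t * DF l := by
        rw [show t :: l = [t] ++ l from rfl, DF_append, DF_singleton]
      rw [h1, map_mul, ih, h2, treeCoproduct, MvPolynomial.aeval_X]

theorem copElem_eq (a : Fin ℓ) (ts : List (LTree ℓ)) :
    copElem (node a ts) = (X (node a ts) ⊗ₜ[ℝ] 1) +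
      ((CF ts).map fun p => forestMonomial p.1 ⊗ₜ[ℝ] X (node a p.2)).sum := by
  rw [copElem, cop_eq]
  simp [List.map_map, Function.comp_def, M_singleton, M_nil]


theorem list_sum_tmul {α M N : Type*} [AddCommMonoid M] [AddCommMonoid N]
    [Module ℝ M] [Module ℝ N] (l : List α) (f : α → M) (c : N) :
    ((l.map f).sum) ⊗ₜ[ℝ] c = (l.map fun x => f x ⊗ₜ[ℝ] c).sum := by
  induction l with
  | nil => simp
  | cons a l ih => simp [TensorProduct.add_tmul, ih]

theorem tmul_list_sum {α M N : Type*} [AddCommMonoid M] [AddCommMonoid N]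
    [Module ℝ M] [Module ℝ N] (l : List α) (f : α → N) (c : M) :
    (c ⊗ₜ[ℝ] (l.map f).sum) = (l.map fun x => c ⊗ₜ[ℝ] f x).sum := by
  induction l with
  | nil => simp
  | cons a l ih => simp [TensorProduct.tmul_add, ih]

noncomputable def LS (ps : List (List (LTree ℓ) × List (LTree ℓ)))
    (ψ : List (LTree ℓ) → TreeAlg ℓ) :
    (TreeAlg ℓ ⊗[ℝ] TreeAlg ℓ) ⊗[ℝ] TreeAlg ℓ :=
  (ps.map fun p => DF p.1 ⊗ₜ[ℝ] ψ p.2).sum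

noncomputable def RS (ps : List (List (LTree ℓ) × List (LTree ℓ)))
    (ψ : List (LTree ℓ) → TreeAlg ℓ) :
    (TreeAlg ℓ ⊗[ℝ] TreeAlg ℓ) ⊗[ℝ] TreeAlg ℓ :=
  (ps.map fun p => ((CF p.2).map fun q =>
    (forestMonomial p.1 ⊗ₜ[ℝ] forestMonomial q.1) ⊗ₜ[ℝ] ψ q.2).sum).sum

theorem sum_map_mul_left' {α : Type*} (l : List α)
    (f : α → (TreeAlg ℓ ⊗[ℝ] TreeAlg ℓ) ⊗[ℝ] TreeAlg ℓ)
    (r : (TreeAlg ℓ ⊗[ℝ] TreeAlg ℓ) ⊗[ℝ] TreeAlg ℓ) :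
    (l.map fun b => r * f b).sum = r * (l.map f).sum := by
  induction l with
  | nil => show (0:_) = r * 0; ring
  | cons a l ih =>
      simp only [List.map_cons, List.sum_cons, ih]
      ring

theorem mul_tmul_one (x y : TreeAlg ℓ ⊗[ℝ] TreeAlg ℓ) (c : TreeAlg ℓ) :
    (x ⊗ₜ[ℝ] (1 : TreeAlg ℓ)) * (y ⊗ₜ[ℝ] c) = (x * y) ⊗ₜ[ℝ] c := by
  rw [Algebra.TensorProduct.tmul_mul_tmul, one_mul]

mutual

theorem keyT : ∀ (τ : LTree ℓ) (ψ : List (LTree ℓ) → TreeAlg ℓ),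
    LS (cop τ) ψ = RS (cop τ) ψ
  | node a ts, ψ => by
    have ihF : ∀ ψ', LS (CF ts) ψ' = RS (CF ts) ψ' := fun ψ' => keyF ts ψ'
    rw [cop_eq]
    simp only [LS, RS, List.map_cons, List.sum_cons, List.map_map, Function.comp_def]
    rw [DF_singleton, copElem_eq, TensorProduct.add_tmul, list_sum_tmul,
      show (List.map (fun x => DF x.1 ⊗ₜ[ℝ] ψ [node a x.2]) (CF ts)).sum
        = LS (CF ts) (fun s => ψ [node a s]) from rfl,
      ihF (fun s => ψ [node a s])]
    simp only [RS, CF_nil, CF_singleton, cop_eq, List.map_cons, List.sum_cons,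
      List.map_map, Function.comp_def, M_nil, M_singleton, List.map_nil,
      List.sum_nil, add_zero, List.sum_map_add]
    abel
termination_by τ _ => sizeOf τ
decreasing_by all_goals (simp_wf <;> omega)

theorem keyF : ∀ (ts : List (LTree ℓ)) (ψ : List (LTree ℓ) → TreeAlg ℓ),
    LS (CF ts) ψ = RS (CF ts) ψ
  | [], ψ => by
    simp [LS, RS, CF_nil, DF_nil, M_nil, Algebra.TensorProduct.one_def]
  | t :: l, ψ => by
    have ihT : ∀ ψ', LS (cop t) ψ' = RS (cop t) ψ' := fun ψ' => keyT t ψ'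
    have ihF : ∀ ψ', LS (CF l) ψ' = RS (CF l) ψ' := fun ψ' => keyF l ψ'
    calc LS (CF (t :: l)) ψ
        = ((CF l).map fun r => ((cop t).map fun p =>
            (DF p.1 ⊗ₜ[ℝ] (1:TreeAlg ℓ)) * (DF r.1 ⊗ₜ[ℝ] ψ (p.2 ++ r.2))).sum).sum := by
          rw [LS, CF_cons, sum_map_flatMap]
          simp only [List.map_map, Function.comp_def, DF_append, mul_tmul_one]
      _ = ((cop t).map fun p =>
            (DF p.1 ⊗ₜ[ℝ] (1:TreeAlg ℓ)) * LS (CF l) (fun s => ψ (p.2 ++ s))).sum := by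
          rw [sum_map_comm]
          simp only [LS, sum_map_mul_left']
      _ = ((cop t).map fun p => ((CF l).map fun r => ((CF r.2).map fun q2 =>
            ((forestMonomial r.1 ⊗ₜ[ℝ] forestMonomial q2.1) ⊗ₜ[ℝ] (1:TreeAlg ℓ)) *
              (DF p.1 ⊗ₜ[ℝ] ψ (p.2 ++ q2.2))).sum).sum).sum := by
          simp only [ihF, RS]
          simp only [← sum_map_mul_left']
          simp only [mul_tmul_one]
          simp only [mul_comm]
      _ = ((CF l).map fun r => ((CF r.2).map fun q2 =>
            ((forestMonomial r.1 ⊗ₜ[ℝ] forestMonomial q2.1) ⊗ₜ[ℝ] (1:TreeAlg ℓ)) *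
              LS (cop t) (fun s => ψ (s ++ q2.2))).sum).sum := by
          rw [sum_map_comm]
          refine congrArg List.sum (List.map_congr_left fun r _ => ?_)
          rw [sum_map_comm]
          refine congrArg List.sum (List.map_congr_left fun q2 _ => ?_)
          simp only [LS]
          rw [sum_map_mul_left']
      _ = ((CF l).map fun r => ((CF r.2).map fun q2 =>
            ((forestMonomial r.1 ⊗ₜ[ℝ] forestMonomial q2.1) ⊗ₜ[ℝ] (1:TreeAlg ℓ)) *
              RS (cop t) (fun s => ψ (s ++ q2.2))).sum).sum := by
          simp only [ihT]
      _ = RS (CF (t :: l)) ψ := by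
          rw [RS, CF_cons, sum_map_flatMap]
          simp only [List.map_map, Function.comp_def, CF_append, sum_map_flatMap,
            M_append, RS]
          simp only [← sum_map_mul_left']
          simp only [Algebra.TensorProduct.tmul_mul_tmul, one_mul, mul_one]
          refine congrArg List.sum (List.map_congr_left fun r _ => ?_)
          conv_lhs => rw [sum_map_comm]
          simp only [mul_comm]
termination_by ts _ => sizeOf ts
decreasing_by all_goals (simp_wf <;> omega)

end

theorem mapDelta_copElem (τ : LTree ℓ) :
    (Algebra.TensorProduct.map (treeCoproduct ℓ) (AlgHom.id ℝ (TreeAlg ℓ))) (copElem τ)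
      = LS (cop τ) forestMonomial := by
  rw [copElem, map_list_sum, List.map_map, LS]
  simp only [Function.comp_def, Algebra.TensorProduct.map_tmul, AlgHom.coe_id, id_eq,
    delta_monomial]

theorem mapId_copElem (τ : LTree ℓ) :
    (Algebra.TensorProduct.map (AlgHom.id ℝ (TreeAlg ℓ)) (treeCoproduct ℓ)) (copElem τ)
      = ((cop τ).map fun p => ((CF p.2).map fun q =>
          forestMonomial p.1 ⊗ₜ[ℝ] (forestMonomial q.1 ⊗ₜ[ℝ] forestMonomial q.2)).sum).sum := by
  rw [copElem, map_list_sum, List.map_map]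
  simp only [Function.comp_def, Algebra.TensorProduct.map_tmul, AlgHom.coe_id, id_eq,
    delta_monomial, DF, tmul_list_sum, List.map_map]

theorem key_main (τ : LTree ℓ) :
    (Algebra.TensorProduct.assoc ℝ ℝ ℝ (TreeAlg ℓ) (TreeAlg ℓ) (TreeAlg ℓ))
        ((Algebra.TensorProduct.map (treeCoproduct ℓ) (AlgHom.id ℝ (TreeAlg ℓ)))
          (copElem τ))
      = (Algebra.TensorProduct.map (AlgHom.id ℝ (TreeAlg ℓ)) (treeCoproduct ℓ))
          (copElem τ) := by
  rw [mapDelta_copElem, mapId_copElem, keyT τ forestMonomial, RS]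
  rw [map_list_sum, List.map_map]
  simp only [Function.comp_def, map_list_sum, List.map_map,
    Algebra.TensorProduct.assoc_tmul]

end TreeProof

/-- The subtree coproduct `Δ` on the polynomial algebra over rooted
labelled trees is coassociative: `(Δ ⊗ Id)∘Δ = (Id ⊗ Δ)∘Δ` (up to the canonical
associator of the tensor product). -/
theorem treeCoproduct_coassociative (ℓ : ℕ) (x : TreeAlg ℓ) :
    (Algebra.TensorProduct.assoc ℝ ℝ ℝ (TreeAlg ℓ) (TreeAlg ℓ) (TreeAlg ℓ))
        ((Algebra.TensorProduct.map (treeCoproduct ℓ) (AlgHom.id ℝ (TreeAlg ℓ)))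
          (treeCoproduct ℓ x))
      = (Algebra.TensorProduct.map (AlgHom.id ℝ (TreeAlg ℓ)) (treeCoproduct ℓ))
          (treeCoproduct ℓ x) := by
  have h : ((Algebra.TensorProduct.assoc ℝ ℝ ℝ (TreeAlg ℓ) (TreeAlg ℓ) (TreeAlg ℓ)).toAlgHom.comp
        ((Algebra.TensorProduct.map (treeCoproduct ℓ) (AlgHom.id ℝ (TreeAlg ℓ))).comp
          (treeCoproduct ℓ)))
      = (Algebra.TensorProduct.map (AlgHom.id ℝ (TreeAlg ℓ)) (treeCoproduct ℓ)).comp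
          (treeCoproduct ℓ) := by
    apply MvPolynomial.algHom_ext
    intro τ
    have hX : treeCoproduct ℓ (MvPolynomial.X τ) = copElem τ :=
      MvPolynomial.aeval_X _ τ
    simp only [AlgHom.comp_apply, hX, AlgEquiv.toAlgHom_eq_coe, AlgHom.coe_coe]
    exact TreeProof.key_main τ
  have := DFunLike.congr_fun h x
  simpa using this
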